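/- arXiv:2103.16065 — 3 statements merged into one kernel-verified Lean document; each statement's English description precedes it below -/
import Mathlib

section
/- Let M and K be skew-symmetric real d×d matrices, let S : ℝ^d × ℝ → ℝ be continuously differentiable in its first argument (write ∇_z S for the gradient in the first argument), and let z : ℝ × ℝ → ℝ^d, (x,t) ↦ z(x,t), be twice continuously differentiable. If M ∂_t z + K ∂_x z = ∇_z S(z, x) holds everywhere, then the local energy conservation law ∂_t E + ∂_x F = 0 holds everywhere, where E = S(z, x) − (1/2) zᵀ K ∂_x z and F = (1/2) zᵀ K ∂_t z. -/
open scoped Matrix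

noncomputable def dotCLM {d : ℕ} (g : Fin d → ℝ) : (Fin d → ℝ) →L[ℝ] ℝ :=
  ∑ i : Fin d, g i • (ContinuousLinearMap.proj i : (Fin d → ℝ) →L[ℝ] ℝ)

lemma dotCLM_apply {d : ℕ} (g v : Fin d → ℝ) :
    dotCLM g v = dotProduct g v := by
  simp [dotCLM, dotProduct]

lemma hasDerivAt_comp_pi {d : ℕ} {a : ℝ → Fin d → ℝ} {a' : Fin d → ℝ} {t : ℝ}
    (h : HasDerivAt a a' t) (i : Fin d) : HasDerivAt (fun s => a s i) (a' i) t := by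
  have := (ContinuousLinearMap.proj i :
      (Fin d → ℝ) →L[ℝ] ℝ).hasFDerivAt.comp_hasDerivAt t h
  simpa [Function.comp_def] using this

lemma hasDerivAt_dot {d : ℕ} {a b : ℝ → Fin d → ℝ} {a' b' : Fin d → ℝ} {t : ℝ}
    (ha : HasDerivAt a a' t) (hb : HasDerivAt b b' t) :
    HasDerivAt (fun s => dotProduct (a s) (b s))
      (dotProduct a' (b t) + dotProduct (a t) b') t := by
  have h : ∀ i ∈ Finset.univ, HasDerivAt (fun s => a s i * b s i)
      (a' i * b t i + a t i * b' i) t :=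
    fun i _ => (hasDerivAt_comp_pi ha i).mul (hasDerivAt_comp_pi hb i)
  have := HasDerivAt.fun_sum h
  simpa [dotProduct, Finset.sum_add_distrib] using this

lemma hasDerivAt_mulVec {d : ℕ} (K : Matrix (Fin d) (Fin d) ℝ)
    {b : ℝ → Fin d → ℝ} {b' : Fin d → ℝ} {t : ℝ} (hb : HasDerivAt b b' t) :
    HasDerivAt (fun s => K.mulVec (b s)) (K.mulVec b') t := by
  have := (LinearMap.toContinuousLinearMap
      (Matrix.mulVecLin K)).hasFDerivAt.comp_hasDerivAt t hb
  simpa [Function.comp_def] using this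

lemma skew_dot_self {d : ℕ} {M : Matrix (Fin d) (Fin d) ℝ} (hM : Mᵀ = -M)
    (v : Fin d → ℝ) : dotProduct (M.mulVec v) v = 0 := by
  have h1 : dotProduct v (M.mulVec v)
      = dotProduct (Mᵀ.mulVec v) v := by
    rw [Matrix.dotProduct_mulVec, Matrix.mulVec_transpose]
  rw [hM, Matrix.neg_mulVec, neg_dotProduct] at h1
  have h2 : dotProduct (M.mulVec v) v = dotProduct v (M.mulVec v) :=
    dotProduct_comm _ _
  linarith [h1, h2]

lemma skew_dot_swap {d : ℕ} {K : Matrix (Fin d) (Fin d) ℝ} (hK : Kᵀ = -K)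
    (a b : Fin d → ℝ) :
    dotProduct a (K.mulVec b) = -dotProduct b (K.mulVec a) := by
  have h1 : dotProduct a (K.mulVec b)
      = dotProduct (Kᵀ.mulVec a) b := by
    rw [Matrix.dotProduct_mulVec, Matrix.mulVec_transpose]
  rw [hK, Matrix.neg_mulVec, neg_dotProduct] at h1
  rw [h1, dotProduct_comm]

theorem stmt0 {d : ℕ} (M K : Matrix (Fin d) (Fin d) ℝ)
    (hM : Mᵀ = -M) (hK : Kᵀ = -K)
    (S : (Fin d → ℝ) → ℝ → ℝ) (gradS : (Fin d → ℝ) → ℝ → (Fin d → ℝ))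
    (hS : ∀ (x : ℝ) (w : Fin d → ℝ), HasFDerivAt (fun w' => S w' x) (dotCLM (gradS w x)) w)
    (hSc : ∀ x : ℝ, Continuous fun w => gradS w x)
    (z : ℝ → ℝ → (Fin d → ℝ))
    (hz : ContDiff ℝ 2 fun p : ℝ × ℝ => z p.1 p.2)
    (zt zx : ℝ → ℝ → (Fin d → ℝ))
    (hzt : ∀ x t, zt x t = deriv (fun τ => z x τ) t)
    (hzx : ∀ x t, zx x t = deriv (fun ξ => z ξ t) x)
    (hpde : ∀ x t, M.mulVec (zt x t) + K.mulVec (zx x t) = gradS (z x t) x)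
    (E F : ℝ → ℝ → ℝ)
    (hE : ∀ x t, E x t = S (z x t) x - (1/2) * dotProduct (z x t) (K.mulVec (zx x t)))
    (hF : ∀ x t, F x t = (1/2) * dotProduct (z x t) (K.mulVec (zt x t))) :
    ∀ x t, deriv (fun τ => E x τ) t + deriv (fun ξ => F ξ t) x = 0 := by
  intro x t
  set f : ℝ × ℝ → Fin d → ℝ := fun p => z p.1 p.2 with hfdef
  have hdf : ∀ p, HasFDerivAt f (fderiv ℝ f p) p := fun p =>
    (hz.differentiable two_ne_zero p).hasFDerivAt
  have hD : ContDiff ℝ 1 (fderiv ℝ f) := hz.fderiv_right (by norm_num)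
  -- curves
  have hcurT : ∀ x' t', HasDerivAt (fun τ => ((x', τ) : ℝ × ℝ)) (0, 1) t' :=
    fun x' t' => (hasDerivAt_const t' x').prodMk (hasDerivAt_id t')
  have hcurX : ∀ x' t', HasDerivAt (fun ξ => ((ξ, t') : ℝ × ℝ)) (1, 0) x' :=
    fun x' t' => (hasDerivAt_id x').prodMk (hasDerivAt_const x' t')
  -- first partials
  have hztD : ∀ x' t', HasDerivAt (fun τ => z x' τ) (fderiv ℝ f (x', t') (0, 1)) t' :=
    fun x' t' => (hdf (x', t')).comp_hasDerivAt t' (hcurT x' t')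
  have hzxD : ∀ x' t', HasDerivAt (fun ξ => z ξ t') (fderiv ℝ f (x', t') (1, 0)) x' :=
    fun x' t' => by have := (hdf (x', t')).comp_hasDerivAt x' (hcurX x' t'); exact this
  have hztv : ∀ x' t', zt x' t' = fderiv ℝ f (x', t') (0, 1) := fun x' t' => by
    rw [hzt]; exact (hztD x' t').deriv
  have hzxv : ∀ x' t', zx x' t' = fderiv ℝ f (x', t') (1, 0) := fun x' t' => by
    rw [hzx]; exact (hzxD x' t').deriv
  -- second derivative and symmetry
  set D2 : (ℝ × ℝ) →L[ℝ] (ℝ × ℝ) →L[ℝ] (Fin d → ℝ) := fderiv ℝ (fderiv ℝ f) (x, t)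
    with hD2def
  have hD2 : HasFDerivAt (fderiv ℝ f) D2 (x, t) :=
    (hD.differentiable one_ne_zero (x, t)).hasFDerivAt
  have hsymm : D2 (0, 1) (1, 0) = D2 (1, 0) (0, 1) :=
    second_derivative_symmetric hdf hD2 _ _
  -- derivative of τ ↦ zx x τ at t
  have hDt : HasDerivAt (fun τ => fderiv ℝ f (x, τ)) (D2 (0, 1)) t :=
    hD2.comp_hasDerivAt t (hcurT x t)
  have hzxT : HasDerivAt (fun τ => zx x τ) (D2 (0, 1) (1, 0)) t := by
    have := (ContinuousLinearMap.apply ℝ (Fin d → ℝ)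
        ((1, 0) : ℝ × ℝ)).hasFDerivAt.comp_hasDerivAt t hDt
    have heq : (fun τ => zx x τ) = fun τ => fderiv ℝ f (x, τ) (1, 0) :=
      funext fun τ => hzxv x τ
    rw [heq]
    simpa [Function.comp_def] using this
  -- derivative of ξ ↦ zt ξ t at x
  have hDx : HasDerivAt (fun ξ => fderiv ℝ f (ξ, t)) (D2 (1, 0)) x :=
    hD2.comp_hasDerivAt x (hcurX x t)
  have hztX : HasDerivAt (fun ξ => zt ξ t) (D2 (1, 0) (0, 1)) x := by
    have := (ContinuousLinearMap.apply ℝ (Fin d → ℝ)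
        ((0, 1) : ℝ × ℝ)).hasFDerivAt.comp_hasDerivAt x hDx
    have heq : (fun ξ => zt ξ t) = fun ξ => fderiv ℝ f (ξ, t) (0, 1) :=
      funext fun ξ => hztv ξ t
    rw [heq]
    simpa [Function.comp_def] using this
  -- rewrite HasDerivAt for z partials in terms of zt, zx
  have hztD' : HasDerivAt (fun τ => z x τ) (zt x t) t := by
    rw [hztv x t]; exact hztD x t
  have hzxD' : ∀ t', HasDerivAt (fun ξ => z ξ t') (zx x t') x := by
    intro t'; rw [hzxv x t']; exact hzxD x t'
  -- derivative of E in t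
  have hSderiv : HasDerivAt (fun τ => S (z x τ) x)
      (dotProduct (gradS (z x t) x) (zt x t)) t := by
    have := (hS x (z x t)).comp_hasDerivAt t hztD'
    simpa [Function.comp_def, dotCLM_apply] using this
  have hBderiv : HasDerivAt
      (fun τ => dotProduct (z x τ) (K.mulVec (zx x τ)))
      (dotProduct (zt x t) (K.mulVec (zx x t)) +
        dotProduct (z x t) (K.mulVec (D2 (0, 1) (1, 0)))) t :=
    hasDerivAt_dot hztD' (hasDerivAt_mulVec K hzxT)
  have hEderiv : HasDerivAt (fun τ => E x τ)
      (dotProduct (gradS (z x t) x) (zt x t) -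
        (1/2) * (dotProduct (zt x t) (K.mulVec (zx x t)) +
          dotProduct (z x t) (K.mulVec (D2 (0, 1) (1, 0))))) t := by
    have heq : (fun τ => E x τ) = fun τ =>
        S (z x τ) x - (1/2) * dotProduct (z x τ) (K.mulVec (zx x τ)) :=
      funext fun τ => hE x τ
    rw [heq]
    exact hSderiv.sub (hBderiv.const_mul (1/2))
  -- derivative of F in x
  have hFderiv : HasDerivAt (fun ξ => F ξ t)
      ((1/2) * (dotProduct (zx x t) (K.mulVec (zt x t)) +
        dotProduct (z x t) (K.mulVec (D2 (1, 0) (0, 1))))) x := by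
    have heq : (fun ξ => F ξ t) = fun ξ =>
        (1/2) * dotProduct (z ξ t) (K.mulVec (zt ξ t)) :=
      funext fun ξ => hF ξ t
    rw [heq]
    exact (hasDerivAt_dot (hzxD' t) (hasDerivAt_mulVec K hztX)).const_mul (1/2)
  rw [hEderiv.deriv, hFderiv.deriv]
  -- algebra
  rw [← hsymm]
  have hgrad : dotProduct (gradS (z x t) x) (zt x t)
      = dotProduct (zt x t) (K.mulVec (zx x t)) := by
    rw [← hpde x t, add_dotProduct, skew_dot_self hM,
      dotProduct_comm]
    ring
  have hswap : dotProduct (zx x t) (K.mulVec (zt x t))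
      = -dotProduct (zt x t) (K.mulVec (zx x t)) := skew_dot_swap hK _ _
  rw [hgrad, hswap]
  ring
end

section
/- Assume the CRK setup. Let Δt ∈ ℝ, let g : [0,1] → ℝ^d be continuous, let z⁰ ∈ ℝ^d, define z(τ) = z⁰ + Δt ∫₀¹ A_{τ,σ} g(σ) dσ, and let S : ℝ^d → ℝ be continuously differentiable. Then S(z(1)) − S(z(0)) = Δt Σ_{i=1}^s b_i ⟨g⟩_iᵀ ⟨∇S ∘ z⟩_i, where ⟨∇S ∘ z⟩_i = (1/b_i) ∫₀¹ l_i(τ) ∇S(z(τ)) dτ. -/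
open scoped Matrix

noncomputable def lag {s : ℕ} (c : Fin s → ℝ) (i : Fin s) (τ : ℝ) : ℝ :=
  (Lagrange.basis (Finset.univ : Finset (Fin s)) c i).eval τ

noncomputable def bw {s : ℕ} (c : Fin s → ℝ) (i : Fin s) : ℝ :=
  ∫ τ in (0:ℝ)..1, lag c i τ

noncomputable def Acrk {s : ℕ} (c : Fin s → ℝ) (τ σ : ℝ) : ℝ :=
  ∑ i : Fin s, (1 / bw c i) * (∫ α in (0:ℝ)..τ, lag c i α) * lag c i σ

noncomputable def wavg {s : ℕ} (c : Fin s → ℝ) (i : Fin s) {G : Type*}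
    [NormedAddCommGroup G] [NormedSpace ℝ G] (f : ℝ → G) : G :=
  (1 / bw c i) • ∫ τ in (0:ℝ)..1, lag c i τ • f τ

lemma lag_continuous {s : ℕ} (c : Fin s → ℝ) (i : Fin s) : Continuous (lag c i) :=
  (Lagrange.basis (Finset.univ : Finset (Fin s)) c i).continuous

theorem stmt4 {s d : ℕ} (hs : 1 ≤ s) (c : Fin s → ℝ) (hc : Function.Injective c)
    (hb : ∀ i, bw c i ≠ 0)
    (Δt : ℝ) (g : ℝ → (Fin d → ℝ)) (hg : ContinuousOn g (Set.Icc 0 1))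
    (z0 : Fin d → ℝ) (z : ℝ → (Fin d → ℝ))
    (hz : ∀ τ, z τ = z0 + Δt • ∫ σ in (0:ℝ)..1, Acrk c τ σ • g σ)
    (S : (Fin d → ℝ) → ℝ) (gradS : (Fin d → ℝ) → (Fin d → ℝ))
    (hS : ∀ w, HasFDerivAt S (dotCLM (gradS w)) w)
    (hSc : Continuous gradS) :
    S (z 1) - S (z 0)
      = Δt * ∑ i, bw c i * dotProduct (wavg c i g) (wavg c i fun τ => gradS (z τ)) := by
  classical
  set u : Fin s → (Fin d → ℝ) := fun i => wavg c i g with hu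
  set L : Fin s → ℝ → ℝ := fun i τ => ∫ α in (0:ℝ)..τ, lag c i α with hLdef
  have hIcc : Set.uIcc (0:ℝ) 1 = Set.Icc 0 1 := Set.uIcc_of_le zero_le_one
  have hgi : ∀ i, IntervalIntegrable (fun σ => lag c i σ • g σ) MeasureTheory.volume 0 1 := by
    intro i
    apply ContinuousOn.intervalIntegrable
    rw [hIcc]
    exact ((lag_continuous c i).continuousOn).smul hg
  -- z as explicit finite sum
  have hz' : ∀ τ, z τ = z0 + ∑ i, (Δt * L i τ) • u i := by
    intro τ
    rw [hz τ]
    congr 1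
    have h1 : ∀ σ, Acrk c τ σ • g σ = ∑ i, ((1 / bw c i) * L i τ) • (lag c i σ • g σ) := by
      intro σ
      simp only [Acrk, Finset.sum_smul, smul_smul]
      rfl
    have h2 : (∫ σ in (0:ℝ)..1, Acrk c τ σ • g σ)
        = ∑ i, ((1 / bw c i) * L i τ) • ∫ σ in (0:ℝ)..1, lag c i σ • g σ := by
      simp_rw [h1]
      rw [intervalIntegral.integral_finset_sum (fun i _ => by
        apply ContinuousOn.intervalIntegrable
        rw [hIcc]
        exact continuous_const.continuousOn.fun_smul
          (((lag_continuous c i).continuousOn).smul hg))]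
      exact Finset.sum_congr rfl fun i _ => intervalIntegral.integral_smul _ _
    rw [h2, Finset.smul_sum]
    refine Finset.sum_congr rfl fun i _ => ?_
    simp only [hu, wavg, smul_smul]
    congr 1
    ring
  have hLd : ∀ i τ, HasDerivAt (L i) (lag c i τ) τ := fun i τ =>
    intervalIntegral.integral_hasDerivAt_right
      ((lag_continuous c i).intervalIntegrable 0 τ)
      ((lag_continuous c i).stronglyMeasurableAtFilter _ _)
      (lag_continuous c i).continuousAt
  have hzd : ∀ τ, HasDerivAt z (∑ i, (Δt * lag c i τ) • u i) τ := by
    intro τ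
    rw [funext hz']
    refine HasDerivAt.const_add _ (HasDerivAt.fun_sum fun i _ => ?_)
    exact ((hLd i τ).const_mul Δt).smul_const (u i)
  have hLc : ∀ i, Continuous (L i) := fun i =>
    continuous_iff_continuousAt.mpr fun τ => (hLd i τ).continuousAt
  have hzc : Continuous z := by
    rw [funext hz']
    exact continuous_const.add (continuous_finset_sum _ fun i _ =>
      (continuous_const.mul (hLc i)).smul continuous_const)
  have hGc : Continuous fun τ => gradS (z τ) := hSc.comp hzc
  set φ : ℝ → ℝ := fun τ => ∑ i, (Δt * lag c i τ) * dotProduct (u i) (gradS (z τ))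
    with hφ
  have hφc : Continuous φ := by
    apply continuous_finset_sum
    intro i _
    refine (continuous_const.mul (lag_continuous c i)).mul ?_
    simp_rw [← dotCLM_apply]
    exact (dotCLM (u i)).continuous.comp hGc
  have hderiv : ∀ τ ∈ Set.uIcc (0:ℝ) 1, HasDerivAt (fun t => S (z t)) (φ τ) τ := by
    intro τ _
    have h := (hS (z τ)).comp_hasDerivAt τ (hzd τ)
    refine h.congr_deriv ?_
    simp [hφ, map_sum, dotCLM_apply, dotProduct_comm, dotProduct_smul,
      smul_eq_mul]
  have hFTC := intervalIntegral.integral_eq_sub_of_hasDerivAt hderiv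
    (hφc.intervalIntegrable 0 1)
  rw [← hFTC]
  -- compute the integral
  have hterm : ∀ i : Fin s, (∫ τ in (0:ℝ)..1, (Δt * lag c i τ) * dotProduct (u i) (gradS (z τ)))
      = Δt * (bw c i * dotProduct (u i) (wavg c i fun τ => gradS (z τ))) := by
    intro i
    have hint : IntervalIntegrable (fun τ => lag c i τ • gradS (z τ)) MeasureTheory.volume 0 1 :=
      ((lag_continuous c i).smul hGc).intervalIntegrable 0 1
    have h1 : ∀ τ, (Δt * lag c i τ) * dotProduct (u i) (gradS (z τ))
        = Δt * dotCLM (u i) (lag c i τ • gradS (z τ)) := by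
      intro τ
      rw [map_smul, dotCLM_apply, smul_eq_mul]; ring
    simp_rw [h1]
    rw [intervalIntegral.integral_const_mul, ContinuousLinearMap.intervalIntegral_comp_comm _ hint]
    have h2 : (∫ τ in (0:ℝ)..1, lag c i τ • gradS (z τ))
        = bw c i • wavg c i fun τ => gradS (z τ) := by
      rw [wavg, smul_smul, mul_one_div, div_self (hb i), one_smul]
    rw [h2, map_smul, dotCLM_apply, smul_eq_mul]
  calc (∫ τ in (0:ℝ)..1, φ τ)
      = ∑ i, ∫ τ in (0:ℝ)..1, (Δt * lag c i τ) * dotProduct (u i) (gradS (z τ)) := by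
        rw [hφ]
        apply intervalIntegral.integral_finset_sum
        intro i _
        refine Continuous.intervalIntegrable ?_ 0 1
        refine (continuous_const.mul (lag_continuous c i)).mul ?_
        simp_rw [← dotCLM_apply]
        exact (dotCLM (u i)).continuous.comp hGc
    _ = Δt * ∑ i, bw c i * dotProduct (u i) (wavg c i fun τ => gradS (z τ)) := by
        rw [Finset.mul_sum]
        exact Finset.sum_congr rfl fun i _ => hterm i
end

section
/- Let K be any real d×d matrix, Δx ∈ ℝ, and let b̃_1, …, b̃_r and (ã_{jk})_{1≤j,k≤r} be real Runge–Kutta coefficients satisfying the symplecticity condition b̃_j b̃_k − b̃_j ã_{jk} − b̃_k ã_{kj} = 0 for all j, k. Let z_n, δ_t z_n ∈ ℝ^d and, for j = 1, …, r, let z_{n,j}, δ_t z_{n,j}, δ_x z_{n,j}, δ_x δ_t z_{n,j} ∈ ℝ^d satisfy z_{n,j} = z_n + Δx Σ_{k=1}^r ã_{jk} δ_x z_{n,k} and δ_t z_{n,j} = δ_t z_n + Δx Σ_{k=1}^r ã_{jk} δ_x δ_t z_{n,k}, and define z_{n+1} = z_n + Δx Σ_{j=1}^r b̃_j δ_x z_{n,j}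 and δ_t z_{n+1} = δ_t z_n + Δx Σ_{j=1}^r b̃_j δ_x δ_t z_{n,j}. Then z_{n+1}ᵀ K δ_t z_{n+1} − z_nᵀ K δ_t z_n = Δx Σ_{j=1}^r b̃_j ( z_{n,j}ᵀ K δ_x δ_t z_{n,j} + (δ_x z_{n,j})ᵀ K δ_t z_{n,j} ). -/
open scoped Matrix

private lemma dp_sum_right' {d r : ℕ} (v : Fin d → ℝ) (w : Fin r → Fin d → ℝ) :
    dotProduct v (∑ j, w j) = ∑ j, dotProduct v (w j) := by
  simp [dotProduct, Finset.mul_sum]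
  exact Finset.sum_comm

private lemma dp_sum_left' {d r : ℕ} (v : Fin d → ℝ) (w : Fin r → Fin d → ℝ) :
    dotProduct (∑ j, w j) v = ∑ j, dotProduct (w j) v := by
  simp [dotProduct, Finset.sum_mul]
  exact Finset.sum_comm

private lemma mulVec_sum' {d r : ℕ} (K : Matrix (Fin d) (Fin d) ℝ) (w : Fin r → Fin d → ℝ) :
    K.mulVec (∑ j, w j) = ∑ j, K.mulVec (w j) := by
  ext i
  simp [Matrix.mulVec, dotProduct, Finset.mul_sum]
  exact Finset.sum_comm

theorem stmt12 {d r : ℕ} (K : Matrix (Fin d) (Fin d) ℝ) (Δx : ℝ)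
    (bt : Fin r → ℝ) (a : Matrix (Fin r) (Fin r) ℝ)
    (hsymp : ∀ j k, bt j * bt k - bt j * a j k - bt k * a k j = 0)
    (zn δtzn : Fin d → ℝ) (z δtz δxz δxδtz : Fin r → Fin d → ℝ)
    (hz : ∀ j, z j = zn + Δx • ∑ k, a j k • δxz k)
    (hδt : ∀ j, δtz j = δtzn + Δx • ∑ k, a j k • δxδtz k)
    (zn1 δtzn1 : Fin d → ℝ)
    (hzn1 : zn1 = zn + Δx • ∑ j, bt j • δxz j)
    (hδtzn1 : δtzn1 = δtzn + Δx • ∑ j, bt j • δxδtz j) :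
    dotProduct zn1 (K.mulVec δtzn1) - dotProduct zn (K.mulVec δtzn)
      = Δx * ∑ j, bt j * (dotProduct (z j) (K.mulVec (δxδtz j))
          + dotProduct (δxz j) (K.mulVec (δtz j))) := by
  -- abbreviations
  set B : Fin r → Fin r → ℝ := fun j k => dotProduct (δxz j) (K.mulVec (δxδtz k)) with hB
  have expandR : ∀ j, bt j * (dotProduct (z j) (K.mulVec (δxδtz j))
          + dotProduct (δxz j) (K.mulVec (δtz j)))
      = bt j * dotProduct zn (K.mulVec (δxδtz j))
        + bt j * dotProduct (δxz j) (K.mulVec δtzn)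
        + Δx * ∑ k, (bt j * a j k * B k j + bt j * a j k * B j k) := by
    intro j
    rw [hz j, hδt j]
    simp only [add_dotProduct, dotProduct_add, Matrix.mulVec_add,
      Matrix.mulVec_smul, smul_dotProduct, dotProduct_smul,
      mulVec_sum', dp_sum_left', dp_sum_right', smul_eq_mul, Finset.mul_sum]
    simp only [Matrix.smul_mulVec, dotProduct_smul, smul_dotProduct,
      smul_eq_mul, hB, Finset.mul_sum]
    simp only [mul_add, Finset.mul_sum, Finset.sum_add_distrib]
    ring_nf
  have key : (∑ j, ∑ k, bt j * bt k * B j k)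
      = ∑ j, ∑ k, (bt j * a j k * B k j + bt j * a j k * B j k) := by
    have swap : (∑ j, ∑ k, bt j * a j k * B k j) = ∑ j, ∑ k, bt k * a k j * B j k :=
      Finset.sum_comm
    simp only [Finset.sum_add_distrib, swap]
    rw [← Finset.sum_add_distrib]
    refine Finset.sum_congr rfl fun j _ => ?_
    rw [← Finset.sum_add_distrib]
    refine Finset.sum_congr rfl fun k _ => ?_
    have h2 : bt j * bt k = bt j * a j k + bt k * a k j := by
      have := hsymp j k; linarith
    rw [h2]; ring
  rw [hzn1, hδtzn1]
  simp only [Matrix.mulVec_add, Matrix.mulVec_smul, mulVec_sum', dotProduct_add,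
    add_dotProduct, dotProduct_smul, smul_dotProduct,
    Matrix.smul_mulVec, dp_sum_left', dp_sum_right', smul_eq_mul, Finset.mul_sum]
  simp only [expandR, mul_add, Finset.mul_sum, Finset.sum_add_distrib]
  ring_nf
  have final : (∑ x : Fin r, ∑ y : Fin r,
        Δx ^ 2 * bt x * bt y * dotProduct (δxz y) (K.mulVec (δxδtz x)))
      = (∑ x : Fin r, ∑ y : Fin r, Δx ^ 2 * bt x * a x y * B y x)
        + ∑ x : Fin r, ∑ y : Fin r, Δx ^ 2 * bt x * a x y * B x y := by
    calc (∑ x : Fin r, ∑ y : Fin r,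
          Δx ^ 2 * bt x * bt y * dotProduct (δxz y) (K.mulVec (δxδtz x)))
        = Δx ^ 2 * ∑ j, ∑ k, bt j * bt k * B j k := by
          rw [Finset.sum_comm, Finset.mul_sum]
          refine Finset.sum_congr rfl fun j _ => ?_
          rw [Finset.mul_sum]
          exact Finset.sum_congr rfl fun k _ => by rw [hB]; ring
      _ = Δx ^ 2 * ∑ j, ∑ k, (bt j * a j k * B k j + bt j * a j k * B j k) := by rw [key]
      _ = _ := by
          simp only [Finset.mul_sum, mul_add, Finset.sum_add_distrib]
          congr 1 <;>
            exact Finset.sum_congr rfl fun j _ =>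
              Finset.sum_congr rfl fun k _ => by ring
  linarith [final]
end
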